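/- Let P and Q be disjoint infinite sets of prime numbers, and let M_P = ⟨a_p : p ∈ P⟩ and M_Q = ⟨b_q : q ∈ Q⟩ be Puiseux monoids such that for every p ∈ P the denominator of a_p (in lowest terms) is a nontrivial power of p, and for every q ∈ Q the denominator of b_q is a nontrivial power of q. Then M_P and M_Q are not isomorphic as monoids. -/

import Mathlib

open scoped BigOperators

/-- A Puiseux monoid: an additive submonoid of ℚ consisting of nonnegative elements. -/
def IsPuiseux (M : AddSubmonoid ℚ) : Prop := ∀ x ∈ M, (0:ℚ) ≤ x

/-- `a` is an atom of the submonoid `S`. -/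
def IsAtomOf {α : Type*} [AddCommMonoid α] (S : AddSubmonoid α) (a : α) : Prop :=
  a ∈ S ∧ a ≠ 0 ∧ ∀ u v : α, u ∈ S → v ∈ S → a = u + v → u = 0 ∨ v = 0

/-- `x` has a factorization of length `n` into atoms of `S`. -/
def IsLengthOf {α : Type*} [AddCommMonoid α] (S : AddSubmonoid α) (x : α) (n : ℕ) : Prop :=
  ∃ f : Fin n → α, (∀ i, IsAtomOf S (f i)) ∧ x = ∑ i, f i

/-- The set of lengths of `x` in `S`. -/
def lengthsOf {α : Type*} [AddCommMonoid α] (S : AddSubmonoid α) (x : α) : Set ℕ :=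
  {n | IsLengthOf S x n}

/-- `S` is atomic: every nonzero element is a finite sum of atoms. -/
def AtomicM {α : Type*} [AddCommMonoid α] (S : AddSubmonoid α) : Prop :=
  ∀ x ∈ S, x ≠ 0 → ∃ n : ℕ, IsLengthOf S x n

/-- The system of sets of lengths of `M`. -/
def systemOfLengths (M : AddSubmonoid ℚ) : Set (Set ℕ) :=
  {S | ∃ x ∈ M, lengthsOf M x = S}

/-- The elementary Puiseux monoid ⟨1/p : p prime⟩. -/
def elemPM : AddSubmonoid ℚ :=
  AddSubmonoid.closure {q : ℚ | ∃ p : ℕ, p.Prime ∧ q = 1 / p}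

/-- Puiseux monoids generated over disjoint infinite sets of primes, with
generators whose denominators are nontrivial powers of the respective primes,
are non-isomorphic. -/
private lemma ratio_lemma (M : AddSubmonoid ℚ) (hM : ∀ y ∈ M, (0:ℚ) ≤ y)
    (f : M →+ ℚ) (x0 x : M) (h0 : (0:ℚ) < (x0:ℚ)) :
    f x * (x0:ℚ) = f x0 * (x:ℚ) := by
  set u : ℚ := (x:ℚ) with hu
  set v : ℚ := (x0:ℚ) with hv
  have hu0 : (0:ℚ) ≤ u := hM _ x.2
  have hud : ((u.den:ℚ)) ≠ 0 := by exact_mod_cast u.den_nz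
  have hvd : ((v.den:ℚ)) ≠ 0 := by exact_mod_cast v.den_nz
  have e1 : (u.num:ℚ) = u * u.den := (div_eq_iff hud).mp (Rat.num_div_den u)
  have e2 : (v.num:ℚ) = v * v.den := (div_eq_iff hvd).mp (Rat.num_div_den v)
  have hvnum : ((v.num.natAbs : ℕ) : ℚ) = (v.num : ℚ) := by
    rw [← Int.natAbs_of_nonneg (Rat.num_nonneg.mpr h0.le)]
    exact (Int.cast_natCast _).symm
  have hunum : ((u.num.natAbs : ℕ) : ℚ) = (u.num : ℚ) := by
    rw [← Int.natAbs_of_nonneg (Rat.num_nonneg.mpr hu0)]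
    exact (Int.cast_natCast _).symm
  set n : ℕ := v.num.natAbs * u.den with hn
  set m : ℕ := u.num.natAbs * v.den with hm
  have key : (n:ℚ) * u = (m:ℚ) * v := by
    have : ((n:ℚ)) = (v.num:ℚ) * u.den := by push_cast [hn]; rw [hvnum]
    have h2 : ((m:ℚ)) = (u.num:ℚ) * v.den := by push_cast [hm]; rw [hunum]
    rw [this, h2, e1, e2]; ring
  have hnne : (n:ℚ) ≠ 0 := by
    have hv0 : v.num ≠ 0 := Rat.num_ne_zero.mpr (ne_of_gt h0)
    have : n ≠ 0 := by
      simp [hn, Nat.mul_ne_zero_iff, Int.natAbs_ne_zero, hv0, u.den_nz]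
    exact_mod_cast this
  have hsm : n • x = m • x0 := by
    apply Subtype.ext
    have c1 : ((n • x : M) : ℚ) = n • u := by
      exact map_nsmul M.subtype n x
    have c2 : ((m • x0 : M) : ℚ) = m • v := by
      exact map_nsmul M.subtype m x0
    rw [c1, c2, nsmul_eq_mul, nsmul_eq_mul, key]
  have h2 : (n:ℚ) * f x = (m:ℚ) * f x0 := by
    have := congrArg f hsm
    rw [map_nsmul, map_nsmul, nsmul_eq_mul, nsmul_eq_mul] at this
    exact this
  apply mul_left_cancel₀ hnne
  calc (n:ℚ) * (f x * v) = ((n:ℚ) * f x) * v := by ring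
    _ = ((m:ℚ) * f x0) * v := by rw [h2]
    _ = f x0 * ((m:ℚ) * v) := by ring
    _ = f x0 * ((n:ℚ) * u) := by rw [← key]
    _ = (n:ℚ) * (f x0 * u) := by ring

theorem stmt3 (P Q : Set ℕ) (hP : ∀ p ∈ P, Nat.Prime p) (hQ : ∀ q ∈ Q, Nat.Prime q)
    (hPi : P.Infinite) (hQi : Q.Infinite) (hdisj : Disjoint P Q)
    (a b : ℕ → ℚ)
    (ha : ∀ p ∈ P, 0 < a p ∧ ∃ k : ℕ, 0 < k ∧ (a p).den = p ^ k)
    (hb : ∀ q ∈ Q, 0 < b q ∧ ∃ k : ℕ, 0 < k ∧ (b q).den = q ^ k) :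
    ¬ Nonempty ((AddSubmonoid.closure (a '' P)) ≃+ (AddSubmonoid.closure (b '' Q))) := by
  rintro ⟨φ⟩
  set MP := AddSubmonoid.closure (a '' P) with hMPdef
  set MQ := AddSubmonoid.closure (b '' Q) with hMQdef
  -- every element of MP is nonnegative
  have hMPpos : ∀ y ∈ MP, (0:ℚ) ≤ y := by
    intro y hy
    refine AddSubmonoid.closure_induction ?_ le_rfl ?_ hy
    · rintro z ⟨p, hp, rfl⟩
      exact (ha p hp).1.le
    · intro z w _ _ hz hw; positivity
  -- prime divisors of denominators of elements of MQ lie in Q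
  have hT : ∀ y ∈ MQ, ∀ r : ℕ, r.Prime → r ∣ y.den → r ∈ Q := by
    intro y hy
    refine AddSubmonoid.closure_induction ?_ ?_ ?_ hy
    · rintro z ⟨q, hq, rfl⟩ r hr hrd
      obtain ⟨hbq, k, hk, hden⟩ := hb q hq
      rw [hden] at hrd
      have : r = q := (Nat.prime_dvd_prime_iff_eq hr (hQ q hq)).mp
        (hr.dvd_of_dvd_pow hrd)
      rwa [this]
    · intro r hr hrd
      simp only [Rat.den_ofNat, Nat.dvd_one] at hrd
      exact absurd hrd hr.ne_one
    · intro z w _ _ hz hw r hr hrd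
      have := hrd.trans (Rat.add_den_dvd z w)
      rcases (Nat.Prime.dvd_mul hr).mp this with h | h
      · exact hz r hr h
      · exact hw r hr h
  obtain ⟨p0, hp0⟩ := hPi.nonempty
  have hx0mem : a p0 ∈ MP := AddSubmonoid.subset_closure ⟨p0, hp0, rfl⟩
  set x0 : MP := ⟨a p0, hx0mem⟩ with hx0def
  have ha0 : (0:ℚ) < a p0 := (ha p0 hp0).1
  set f : MP →+ ℚ := MQ.subtype.comp φ.toAddMonoidHom with hfdef
  have hfmem : ∀ x : MP, f x ∈ MQ := fun x => (φ x).2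
  have hfx0 : f x0 ≠ 0 := by
    intro h
    have h1 : (φ x0 : ℚ) = ((0 : MQ) : ℚ) := by simpa [hfdef] using h
    have h2 : φ x0 = 0 := Subtype.ext h1
    have h3 : x0 = 0 := φ.injective (h2.trans (map_zero φ).symm)
    have : a p0 = 0 := congrArg Subtype.val h3
    exact absurd this (ne_of_gt ha0)
  set c : ℚ := f x0 / a p0 with hcdef
  have hc0 : c ≠ 0 := div_ne_zero hfx0 (ne_of_gt ha0)
  -- choose a large prime p in P
  obtain ⟨p, hpP, hpN⟩ := hPi.exists_notMem_finite
    (Set.finite_le_nat (max c.num.natAbs c.den))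
  simp only [Set.mem_setOf_eq, not_le] at hpN
  have hp : Nat.Prime p := hP p hpP
  obtain ⟨hap_pos, k, hk, hden⟩ := ha p hpP
  have hxmem : a p ∈ MP := AddSubmonoid.subset_closure ⟨p, hpP, rfl⟩
  set x : MP := ⟨a p, hxmem⟩ with hxdef
  have hr := ratio_lemma MP hMPpos f x0 x ha0
  set y : ℚ := f x with hydef
  have hyMQ : y ∈ MQ := hfmem x
  have hy : y = c * a p := by
    rw [hcdef, div_mul_eq_mul_div, eq_div_iff (ne_of_gt ha0)]
    simpa using hr
  -- p divides the denominator of a p but not num/den of c, nor num of a p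
  have hpdvd : p ∣ (a p).den := hden ▸ dvd_pow_self p hk.ne'
  have hcnum : ¬ (p:ℤ) ∣ c.num := by
    intro h
    have h1 : p ∣ c.num.natAbs := Int.natCast_dvd.mp h
    have h2 : c.num.natAbs ≠ 0 := Int.natAbs_ne_zero.mpr (Rat.num_ne_zero.mpr hc0)
    have := Nat.le_of_dvd (Nat.pos_of_ne_zero h2) h1
    omega
  have hcden : ¬ p ∣ c.den := by
    intro h
    have := Nat.le_of_dvd c.pos h
    omega
  have hanum : ¬ (p:ℤ) ∣ (a p).num := by
    intro h
    have h1 : p ∣ (a p).num.natAbs := Int.natCast_dvd.mp h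
    have h2 : p ∣ Nat.gcd (a p).num.natAbs (a p).den := Nat.dvd_gcd h1 hpdvd
    rw [(a p).reduced] at h2
    exact hp.ne_one (Nat.dvd_one.mp h2)
  -- integer cross-multiplied equation
  have hud : ((a p).den : ℚ) ≠ 0 := by exact_mod_cast (a p).den_nz
  have hcd : ((c.den : ℚ)) ≠ 0 := by exact_mod_cast c.den_nz
  have hyd : ((y.den : ℚ)) ≠ 0 := by exact_mod_cast y.den_nz
  have ey : (y.num:ℚ) = y * y.den := (div_eq_iff hyd).mp (Rat.num_div_den y)
  have ec : (c.num:ℚ) = c * c.den := (div_eq_iff hcd).mp (Rat.num_div_den c)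
  have eu : ((a p).num:ℚ) = a p * (a p).den := (div_eq_iff hud).mp (Rat.num_div_den (a p))
  have keyQ : (y.num:ℚ) * ((c.den:ℚ) * ((a p).den:ℚ))
      = (c.num:ℚ) * ((a p).num:ℚ) * (y.den:ℚ) := by
    rw [ey, ec, eu, hy]; ring
  have keyZ : y.num * ((c.den:ℤ) * ((a p).den:ℤ)) = c.num * (a p).num * (y.den:ℤ) := by
    exact_mod_cast keyQ
  have hpZ : Prime (p:ℤ) := Nat.prime_iff_prime_int.mp hp
  have hdvdL : (p:ℤ) ∣ y.num * ((c.den:ℤ) * ((a p).den:ℤ)) :=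
    Dvd.dvd.mul_left (Dvd.dvd.mul_left (Int.natCast_dvd_natCast.mpr hpdvd) _) _
  rw [keyZ] at hdvdL
  have hpden : p ∣ y.den := by
    rcases hpZ.dvd_mul.mp hdvdL with h | h
    · rcases hpZ.dvd_mul.mp h with h' | h'
      · exact absurd h' hcnum
      · exact absurd h' hanum
    · exact_mod_cast h
  have hpQ : p ∈ Q := hT y hyMQ p hp hpden
  exact Set.disjoint_left.mp hdisj hpP hpQ
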